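/- Let X be a topological vector space, T a continuous linear operator on X, and x ∈ X. With M_u^T = {y ∈ X : for every neighborhood U of 0, {n ∈ ℕ : y - T^n u ∈ U} has positive upper density}, the following transitivity holds: if y ∈ M_x^T and x ∈ M_u^T, then y ∈ M_u^T. -/

import Mathlib

open Filter Topology

open scoped Classical in
noncomputable def upperDensity (A : Set ℕ) : ℝ :=
  Filter.limsup (fun n : ℕ => (((Finset.range (n + 1)).filter (fun m => m ∈ A)).card : ℝ) / n) Filter.atTop

def Mset {𝕜 X : Type*} [RCLike 𝕜] [AddCommGroup X] [Module 𝕜 X] [TopologicalSpace X]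
    [IsTopologicalAddGroup X] [ContinuousSMul 𝕜 X] (T : X →L[𝕜] X) (x : X) : Set X :=
  {y | ∀ U ∈ 𝓝 (0 : X), 0 < upperDensity {n : ℕ | y - (T ^ n) x ∈ U}}

open scoped Classical in
noncomputable def dseq (A : Set ℕ) : ℕ → ℝ :=
  fun n : ℕ => (((Finset.range (n + 1)).filter (fun m => m ∈ A)).card : ℝ) / n

lemma upperDensity_eq (A : Set ℕ) : upperDensity A = Filter.limsup (dseq A) Filter.atTop := rfl

lemma dseq_nonneg (A : Set ℕ) (n : ℕ) : 0 ≤ dseq A n :=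
  div_nonneg (Nat.cast_nonneg _) (Nat.cast_nonneg _)

lemma dseq_le_two (A : Set ℕ) (n : ℕ) (hn : 1 ≤ n) : dseq A n ≤ 2 := by
  classical
  have hc : (((Finset.range (n + 1)).filter (fun m => m ∈ A)).card : ℝ) ≤ 2 * n := by
    have h1 : ((Finset.range (n + 1)).filter (fun m => m ∈ A)).card ≤ n + 1 := by
      calc ((Finset.range (n + 1)).filter (fun m => m ∈ A)).card
          ≤ (Finset.range (n + 1)).card := Finset.card_filter_le _ _
        _ = n + 1 := Finset.card_range _
    have h2 : n + 1 ≤ 2 * n := by omega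
    exact_mod_cast le_trans h1 h2
  have hn' : (0 : ℝ) < n := by exact_mod_cast hn
  rw [dseq, div_le_iff₀ hn']
  linarith

lemma isBoundedUnder_dseq (A : Set ℕ) :
    Filter.IsBoundedUnder (· ≤ ·) Filter.atTop (dseq A) := by
  refine ⟨2, ?_⟩
  rw [Filter.eventually_map]
  filter_upwards [Filter.eventually_ge_atTop 1] with n hn using dseq_le_two A n hn

lemma isCoboundedUnder_dseq (A : Set ℕ) :
    Filter.IsCoboundedUnder (· ≤ ·) Filter.atTop (dseq A) := by
  refine Filter.IsBoundedUnder.isCoboundedUnder_le ⟨0, ?_⟩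
  rw [Filter.eventually_map]
  exact Filter.Eventually.of_forall fun n => dseq_nonneg A n

lemma exists_mem_of_upperDensity_pos {A : Set ℕ} (hA : 0 < upperDensity A) :
    ∃ n, n ∈ A := by
  classical
  by_contra h
  push_neg at h
  have hz : dseq A = fun _ => (0 : ℝ) := by
    funext n
    have : (Finset.range (n + 1)).filter (fun m => m ∈ A) = ∅ := by
      apply Finset.filter_false_of_mem
      intro m _
      exact h m
    simp [dseq, this]
  rw [upperDensity_eq, hz, Filter.limsup_const] at hA
  exact lt_irrefl 0 hA

open scoped Classical in
lemma count_shift_le {A B : Set ℕ} (n : ℕ) (hAB : ∀ m ∈ A, m + n ∈ B) (N : ℕ) :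
    ((Finset.range (N + 1)).filter (fun m => m ∈ A)).card ≤
    ((Finset.range (N + n + 1)).filter (fun m => m ∈ B)).card := by
  classical
  apply Finset.card_le_card_of_injOn (fun m => m + n)
  · intro m hm
    simp only [Finset.mem_coe, Finset.mem_filter, Finset.mem_range] at hm ⊢
    exact ⟨by omega, hAB m hm.2⟩
  · intro a _ b _ hab
    simpa using hab

lemma upperDensity_pos_of_shift {A B : Set ℕ} (n : ℕ)
    (hAB : ∀ m ∈ A, m + n ∈ B) (hA : 0 < upperDensity A) : 0 < upperDensity B := by
  classical
  set c := upperDensity A with hc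
  have hfreq : ∃ᶠ N in Filter.atTop, c / 2 < dseq A N := by
    apply Filter.frequently_lt_of_lt_limsup (isCoboundedUnder_dseq A)
    rw [← upperDensity_eq]
    linarith
  have hfreqB : ∃ᶠ M in Filter.atTop, c / 4 ≤ dseq B M := by
    rw [Filter.frequently_atTop] at hfreq ⊢
    intro a
    obtain ⟨N, hNa, hN⟩ := hfreq (max a (max n 1))
    have hNn : n ≤ N := le_trans (le_max_left _ _) (le_trans (le_max_right a _) hNa)
    have hN1 : 1 ≤ N := le_trans (le_max_right _ _) (le_trans (le_max_right a _) hNa)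
    refine ⟨N + n, by omega, ?_⟩
    have hNr : (0 : ℝ) < N := by exact_mod_cast hN1
    have hNnr : (0 : ℝ) < (N : ℝ) + n := by positivity
    have hcard := count_shift_le n hAB N
    have hcardr : (((Finset.range (N + 1)).filter (fun m => m ∈ A)).card : ℝ) ≤
        (((Finset.range (N + n + 1)).filter (fun m => m ∈ B)).card : ℝ) := by exact_mod_cast hcard
    have h1 : dseq B (N + n) ≥
        (((Finset.range (N + 1)).filter (fun m => m ∈ A)).card : ℝ) / ((N : ℝ) + n) := by
      rw [dseq, ge_iff_le]
      push_cast
      gcongr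
    have h2 : (((Finset.range (N + 1)).filter (fun m => m ∈ A)).card : ℝ) / ((N : ℝ) + n) ≥
        dseq A N / 2 := by
      rw [dseq, ge_iff_le, div_div, div_le_div_iff₀ (by positivity) hNnr]
      have hnN : (n : ℝ) ≤ N := by exact_mod_cast hNn
      have hcnn : (0 : ℝ) ≤ (((Finset.range (N + 1)).filter (fun m => m ∈ A)).card : ℝ) :=
        Nat.cast_nonneg _
      nlinarith
    have h3 : c / 2 < dseq A N := hN
    linarith
  have := Filter.le_limsup_of_frequently_le hfreqB (isBoundedUnder_dseq B)
  rw [← upperDensity_eq] at this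
  linarith

theorem Mset_trans {𝕜 X : Type*} [RCLike 𝕜] [AddCommGroup X] [Module 𝕜 X]
    [TopologicalSpace X] [IsTopologicalAddGroup X] [ContinuousSMul 𝕜 X]
    (T : X →L[𝕜] X) (u x y : X) (hy : y ∈ Mset T x) (hx : x ∈ Mset T u) :
    y ∈ Mset T u := by
  intro U hU
  obtain ⟨V, hV, hVU⟩ := exists_nhds_zero_half hU
  obtain ⟨n, hn⟩ := exists_mem_of_upperDensity_pos (hy V hV)
  have hW : (T ^ n) ⁻¹' V ∈ 𝓝 (0 : X) := by
    have hc := (T ^ n).continuous.tendsto (0 : X)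
    rw [map_zero] at hc
    exact hc hV
  refine upperDensity_pos_of_shift n ?_ (hx _ hW)
  intro m hm
  have hm' : (T ^ n) (x - (T ^ m) u) ∈ V := hm
  have hkey : (T ^ n) (x - (T ^ m) u) = (T ^ n) x - (T ^ (m + n)) u := by
    rw [map_sub, ← ContinuousLinearMap.mul_apply, ← pow_add, add_comm n m]
  rw [hkey] at hm'
  have : y - (T ^ (m + n)) u = (y - (T ^ n) x) + ((T ^ n) x - (T ^ (m + n)) u) := by abel
  show y - (T ^ (m + n)) u ∈ U
  rw [this]
  exact hVU _ hn _ hm'
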